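/- Let f be a holomorphic function on ℍ×ℂ and m an integer. Then the heat operator commutes with the index-m lattice action: L_m(f)|_m Y = L_m(f|_m Y) for all Y ∈ ℤ². -/

import Mathlib

open Complex Real Finset

noncomputable section

/-- The upper half plane, as a subset of `ℂ`. -/
def UHP : Set ℂ := {τ : ℂ | 0 < τ.im}

/-- Partial derivative with respect to the first variable `τ`. -/
def dTau (f : ℂ → ℂ → ℂ) : ℂ → ℂ → ℂ := fun τ z => deriv (fun w => f w z) τ

/-- Partial derivative with respect to the second variable `z`. -/
def dZ (f : ℂ → ℂ → ℂ) : ℂ → ℂ → ℂ := fun τ z => deriv (fun w => f τ w) z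

/-- The heat operator `L_m = 8πim ∂/∂τ − ∂²/∂z²`. -/
def heatOp (m : ℤ) (f : ℂ → ℂ → ℂ) : ℂ → ℂ → ℂ :=
  fun τ z => 8 * (π : ℂ) * I * (m : ℂ) * dTau f τ z - dZ (dZ f) τ z

/-- The weight `k`, index `m` slash action of `SL(2,ℤ)` on functions `ℍ × ℂ → ℂ`. -/
def jacobiSlash (k m : ℤ) (M : Matrix.SpecialLinearGroup (Fin 2) ℤ) (f : ℂ → ℂ → ℂ) :
    ℂ → ℂ → ℂ := fun τ z =>
  ((M.1 1 0 : ℂ) * τ + (M.1 1 1 : ℂ)) ^ (-k) *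
    Complex.exp (2 * (π : ℂ) * I * (m : ℂ) *
      (-((M.1 1 0 : ℂ) * z ^ 2) / ((M.1 1 0 : ℂ) * τ + (M.1 1 1 : ℂ)))) *
    f (((M.1 0 0 : ℂ) * τ + (M.1 0 1 : ℂ)) / ((M.1 1 0 : ℂ) * τ + (M.1 1 1 : ℂ)))
      (z / ((M.1 1 0 : ℂ) * τ + (M.1 1 1 : ℂ)))

/-- The index `m` action of the lattice `ℤ²` on functions `ℍ × ℂ → ℂ`. -/
def latticeSlash (m : ℤ) (Y : ℤ × ℤ) (f : ℂ → ℂ → ℂ) : ℂ → ℂ → ℂ := fun τ z =>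
  Complex.exp (2 * (π : ℂ) * I * (m : ℂ) * ((Y.1 : ℂ) ^ 2 * τ + 2 * (Y.1 : ℂ) * z)) *
    f τ (z + (Y.1 : ℂ) * τ + (Y.2 : ℂ))

/-- A Jacobi form of weight `k` and index `m`: a holomorphic function on `ℍ × ℂ`,
invariant under both slash actions, with a Fourier expansion supported on
`n ≥ 0`, `r² ≤ 4nm`. -/
structure IsJacobiForm (k m : ℤ) (f : ℂ → ℂ → ℂ) : Prop where
  holo : DifferentiableOn ℂ (fun p : ℂ × ℂ => f p.1 p.2) {p : ℂ × ℂ | 0 < p.1.im}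
  slash_invariant : ∀ M : Matrix.SpecialLinearGroup (Fin 2) ℤ, ∀ τ ∈ UHP, ∀ z : ℂ,
    jacobiSlash k m M f τ z = f τ z
  lattice_invariant : ∀ Y : ℤ × ℤ, ∀ τ ∈ UHP, ∀ z : ℂ,
    latticeSlash m Y f τ z = f τ z
  fourier : ∃ c : ℤ × ℤ → ℂ,
    (∀ n r : ℤ, (n < 0 ∨ 4 * n * m < r ^ 2) → c (n, r) = 0) ∧
    ∀ τ ∈ UHP, ∀ z : ℂ,
      f τ z = ∑' nr : ℤ × ℤ, c nr *
        Complex.exp (2 * (π : ℂ) * I * ((nr.1 : ℂ) * τ + (nr.2 : ℂ) * z))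

/-- The falling factorial `(x)_n = x(x−1)⋯(x−n+1)`. -/
def ffall (x : ℂ) (n : ℕ) : ℂ := ∏ i ∈ Finset.range n, (x - (i : ℂ))

/-- The combinatorial coefficients `C_{r,s,p}` appearing in the Rankin-Cohen brackets. -/
def Ccoef (α β γ : ℂ) (r s p : ℕ) : ℂ :=
  ffall (α + r + s + p) (s + p) / (r.factorial : ℂ) *
    (ffall (β + r + s + p) (r + p) / (s.factorial : ℂ)) *
    (ffall (-(γ + (r : ℂ) + s + p)) (r + s) / (p.factorial : ℂ))

/-- The Rankin-Cohen bracket `[f,f']_{X,v}` of two Jacobi forms. -/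
def jacobiRC (k k' m m' : ℤ) (X : ℂ) (v : ℕ) (f f' : ℂ → ℂ → ℂ) : ℂ → ℂ → ℂ :=
  fun τ z =>
    ∑ r ∈ Finset.range (v / 2 + 1), ∑ s ∈ Finset.range (v / 2 + 1 - r),
      ∑ i ∈ Finset.range (v % 2 + 1),
        Ccoef ((k : ℂ) - 3/2) ((k' : ℂ) - 3/2) ((k : ℂ) + (k' : ℂ) - 3/2 + ((v % 2 : ℕ) : ℂ))
            r s (v / 2 - r - s) *
          ((m : ℂ) ^ (v % 2 - i) * (-(m' : ℂ)) ^ i * (1 + (m : ℂ) * X) ^ s *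
            (1 - (m' : ℂ) * X) ^ r) *
          (heatOp (m + m'))^[v / 2 - r - s]
            (fun τ' z' =>
              (heatOp m)^[r] (dZ^[i] f) τ' z' * (heatOp m')^[s] (dZ^[v % 2 - i] f') τ' z') τ z


/-- **The heat operator commutes with the lattice action**
(Lemma 2 of Choie-Eholzer): for `f` holomorphic on `ℍ × ℂ` and any `Y ∈ ℤ²`,
`L_m(f)|_m Y = L_m(f|_m Y)`. -/
theorem heatOp_latticeSlash (f : ℂ → ℂ → ℂ)
    (hf : DifferentiableOn ℂ (fun p : ℂ × ℂ => f p.1 p.2) {p : ℂ × ℂ | 0 < p.1.im})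
    (m : ℤ) (Y : ℤ × ℤ) (τ : ℂ) (hτ : τ ∈ UHP) (z : ℂ) :
    latticeSlash m Y (heatOp m f) τ z = heatOp m (latticeSlash m Y f) τ z := by
  classical
  have hopen : IsOpen {p : ℂ × ℂ | 0 < p.1.im} :=
    isOpen_lt continuous_const (Complex.continuous_im.comp continuous_fst)
  have hτ' : 0 < τ.im := hτ
  set l : ℂ := (Y.1 : ℂ) with hl
  set ν : ℂ := (Y.2 : ℂ) with hν
  set c : ℂ := 2 * (π : ℂ) * I * (m : ℂ) with hc
  set w : ℂ := z + l * τ + ν with hw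
  set F : ℂ × ℂ → ℂ := fun p => f p.1 p.2 with hFdef
  have hFd : ∀ z' : ℂ, DifferentiableAt ℂ F (τ, z') := fun z' =>
    hf.differentiableAt (hopen.mem_nhds hτ')
  -- entire in the second variable
  have hent : Differentiable ℂ (f τ) := fun z' =>
    (hFd z').comp z' ((differentiableAt_const τ).prodMk differentiableAt_id)
  have hent' : Differentiable ℂ (deriv (f τ)) :=
    analyticOnNhd_univ_iff_differentiable.mp
      ((analyticOnNhd_univ_iff_differentiable.mpr hent).deriv)
  set L : ℂ × ℂ →L[ℂ] ℂ := fderiv ℂ F (τ, w) with hL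
  have hLF : HasFDerivAt F L (τ, w) := (hFd w).hasFDerivAt
  have hT : HasDerivAt (fun t => f t w) (L (1, 0)) τ := by
    have h1 : HasDerivAt (fun t : ℂ => (t, w)) ((1 : ℂ), (0 : ℂ)) τ :=
      (hasDerivAt_id τ).prodMk (hasDerivAt_const τ w)
    exact hLF.comp_hasDerivAt τ h1
  have hZ : HasDerivAt (f τ) (L (0, 1)) w := by
    have h1 : HasDerivAt (fun t : ℂ => (τ, t)) ((0 : ℂ), (1 : ℂ)) w :=
      (hasDerivAt_const w τ).prodMk (hasDerivAt_id w)
    exact hLF.comp_hasDerivAt w h1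
  have hTZ : HasDerivAt (fun t => f t (z + l * t + ν)) (L (1, 0) + l * L (0, 1)) τ := by
    have h1 : HasDerivAt (fun t : ℂ => (t, z + l * t + ν)) ((1 : ℂ), l) τ := by
      refine (hasDerivAt_id τ).prodMk ?_
      simpa using (((hasDerivAt_id τ).const_mul l).const_add z).add_const ν
    have h2 := hLF.comp_hasDerivAt τ (by simpa [hw] using h1)
    have h3 : L (1, l) = L (1, 0) + l * L (0, 1) := by
      have he : ((1 : ℂ), l) = (1, 0) + l • ((0 : ℂ), (1 : ℂ)) := by
        simp [Prod.ext_iff]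
      rw [he, map_add, map_smul, smul_eq_mul]
    rwa [h3] at h2
  -- derivative facts we will use
  have hdT : dTau f τ w = L (1, 0) := hT.deriv
  have hdZ : dZ f τ w = L (0, 1) := hZ.deriv
  have hdZZ : dZ (dZ f) τ w = deriv (deriv (f τ)) w := rfl
  -- exponential factor derivatives
  have hexpT : HasDerivAt (fun t => Complex.exp (c * (l ^ 2 * t + 2 * l * z)))
      (c * l ^ 2 * Complex.exp (c * (l ^ 2 * τ + 2 * l * z))) τ := by
    have h1 : HasDerivAt (fun t : ℂ => c * (l ^ 2 * t + 2 * l * z)) (c * l ^ 2) τ := by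
      simpa using ((((hasDerivAt_id τ).const_mul (l ^ 2)).add_const (2 * l * z)).const_mul c)
    simpa [mul_comm] using h1.cexp
  have hexpZ : ∀ z' : ℂ, HasDerivAt (fun t => Complex.exp (c * (l ^ 2 * τ + 2 * l * t)))
      (2 * c * l * Complex.exp (c * (l ^ 2 * τ + 2 * l * z'))) z' := by
    intro z'
    have h1 : HasDerivAt (fun t : ℂ => c * (l ^ 2 * τ + 2 * l * t)) (2 * c * l) z' := by
      have := (((hasDerivAt_id z').const_mul (2 * l)).const_add (l ^ 2 * τ)).const_mul c
      simpa [mul_comm, mul_assoc, mul_left_comm] using this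
    simpa [mul_comm] using h1.cexp
  -- the slashed function, explicitly
  have hgdef : ∀ (g : ℂ → ℂ → ℂ) (t z' : ℂ), latticeSlash m Y g t z' =
      Complex.exp (c * (l ^ 2 * t + 2 * l * z')) * g t (z' + l * t + ν) := by
    intro g t z'
    simp only [latticeSlash, hc, hl, hν]
  -- ∂τ of the slashed function
  have hdTg : dTau (latticeSlash m Y f) τ z =
      Complex.exp (c * (l ^ 2 * τ + 2 * l * z)) *
        (c * l ^ 2 * f τ w + (L (1, 0) + l * L (0, 1))) := by
    have h1 : HasDerivAt (fun t => latticeSlash m Y f t z)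
        (c * l ^ 2 * Complex.exp (c * (l ^ 2 * τ + 2 * l * z)) * f τ (z + l * τ + ν) +
          Complex.exp (c * (l ^ 2 * τ + 2 * l * z)) * (L (1, 0) + l * L (0, 1))) τ := by
      have := hexpT.mul hTZ
      refine HasDerivAt.congr_of_eventuallyEq (by simpa [← hw] using this) ?_
      filter_upwards with t using (hgdef f t z)
    have := h1.deriv
    simp only [dTau, this, ← hw]
    ring
  -- ∂z of the slashed function, at every point
  have hdZg : ∀ z' : ℂ, dZ (latticeSlash m Y f) τ z' =
      Complex.exp (c * (l ^ 2 * τ + 2 * l * z')) *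
        (2 * c * l * f τ (z' + l * τ + ν) + deriv (f τ) (z' + l * τ + ν)) := by
    intro z'
    have hfz : HasDerivAt (fun t => f τ (t + l * τ + ν)) (deriv (f τ) (z' + l * τ + ν)) z' := by
      have h1 : HasDerivAt (fun t : ℂ => t + l * τ + ν) 1 z' :=
        ((hasDerivAt_id z').add_const (l * τ)).add_const ν
      simpa [Function.comp_def] using ((hent _).hasDerivAt).comp z' h1
    have h1 : HasDerivAt (fun t => latticeSlash m Y f τ t)
        (2 * c * l * Complex.exp (c * (l ^ 2 * τ + 2 * l * z')) * f τ (z' + l * τ + ν) +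
          Complex.exp (c * (l ^ 2 * τ + 2 * l * z')) * deriv (f τ) (z' + l * τ + ν)) z' := by
      have := (hexpZ z').mul hfz
      refine HasDerivAt.congr_of_eventuallyEq (by simpa using this) ?_
      filter_upwards with t using (hgdef f τ t)
    have := h1.deriv
    simp only [dZ, this]
    ring
  -- ∂z∂z of the slashed function
  have hdZZg : dZ (dZ (latticeSlash m Y f)) τ z =
      Complex.exp (c * (l ^ 2 * τ + 2 * l * z)) *
        (4 * c ^ 2 * l ^ 2 * f τ w + 4 * c * l * deriv (f τ) w + deriv (deriv (f τ)) w) := by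
    have hfz : HasDerivAt (fun t => f τ (t + l * τ + ν)) (deriv (f τ) w) z := by
      have h1 : HasDerivAt (fun t : ℂ => t + l * τ + ν) 1 z :=
        ((hasDerivAt_id z).add_const (l * τ)).add_const ν
      simpa [← hw, Function.comp_def] using ((hent _).hasDerivAt).comp z h1
    have hfzz : HasDerivAt (fun t => deriv (f τ) (t + l * τ + ν)) (deriv (deriv (f τ)) w) z := by
      have h1 : HasDerivAt (fun t : ℂ => t + l * τ + ν) 1 z :=
        ((hasDerivAt_id z).add_const (l * τ)).add_const ν
      simpa [← hw, Function.comp_def] using ((hent' _).hasDerivAt).comp z h1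
    have hin : HasDerivAt
        (fun t => 2 * c * l * f τ (t + l * τ + ν) + deriv (f τ) (t + l * τ + ν))
        (2 * c * l * deriv (f τ) w + deriv (deriv (f τ)) w) z :=
      (hfz.const_mul (2 * c * l)).add hfzz
    have h1 : HasDerivAt (fun t => dZ (latticeSlash m Y f) τ t)
        (2 * c * l * Complex.exp (c * (l ^ 2 * τ + 2 * l * z)) *
            (2 * c * l * f τ w + deriv (f τ) w) +
          Complex.exp (c * (l ^ 2 * τ + 2 * l * z)) *
            (2 * c * l * deriv (f τ) w + deriv (deriv (f τ)) w)) z := by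
      have := (hexpZ z).mul hin
      refine HasDerivAt.congr_of_eventuallyEq (by simpa [← hw] using this) ?_
      filter_upwards with t using (hdZg t)
    have := h1.deriv
    have e : dZ (dZ (latticeSlash m Y f)) τ z
        = deriv (fun t => dZ (latticeSlash m Y f) τ t) z := rfl
    rw [e, this]
    ring
  -- put everything together
  have hlhs : latticeSlash m Y (heatOp m f) τ z =
      Complex.exp (c * (l ^ 2 * τ + 2 * l * z)) *
        (8 * (π : ℂ) * I * (m : ℂ) * L (1, 0) - deriv (deriv (f τ)) w) := by
    rw [hgdef]
    simp only [heatOp, ← hw, hdT, hdZZ]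
  have hdZ' : deriv (f τ) w = L (0, 1) := hZ.deriv
  rw [hlhs]
  simp only [heatOp, hdTg, hdZZg, hdZ', hc]
  ring

end
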